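/- Let n, m ≥ 1, let F : (Fin n → ℝ) × (Fin m → ℝ) → ℝ be differentiable and let h : (Fin n → ℝ) → (Fin m → ℝ) be differentiable. For x₀ ∈ (Fin n → ℝ), the following are equivalent: (1) x₀ is a critical point of the substituted function x ↦ F(x, h(x)), i.e. its Fréchet derivative at x₀ vanishes; (2) there exists λ ∈ (Fin m → ℝ) such that (x₀, h(x₀), λ) is a critical point of the extended function (x, y, λ) ↦ F(x, y) + ⟪λ, h(x) − y⟫, i.e. the Fréchet derivative of the extended function vanishes at (x₀, h(x₀), λ). -/

import Mathlib

open InnerProductSpace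

/-- Finite-dimensional form of the paper's first Lemma: `x₀` is a critical point
of the substituted ("restricted") function `x ↦ F(x, h(x))` if and only if there
is a Lagrange multiplier `λ` such that `(x₀, h(x₀), λ)` is a critical point of the
extended function `(x, y, λ) ↦ F(x, y) + ⟪λ, h(x) - y⟫`. -/
theorem restricted_iff_lagrange_multiplier
    (n m : ℕ) (hn : 1 ≤ n) (hm : 1 ≤ m)
    (F : (EuclideanSpace ℝ (Fin n) × EuclideanSpace ℝ (Fin m)) → ℝ)
    (hF : Differentiable ℝ F)
    (h : EuclideanSpace ℝ (Fin n) → EuclideanSpace ℝ (Fin m))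
    (hh : Differentiable ℝ h)
    (x₀ : EuclideanSpace ℝ (Fin n)) :
    fderiv ℝ (fun x => F (x, h x)) x₀ = 0 ↔
      ∃ lam : EuclideanSpace ℝ (Fin m),
        fderiv ℝ
          (fun p : EuclideanSpace ℝ (Fin n) × EuclideanSpace ℝ (Fin m) ×
              EuclideanSpace ℝ (Fin m) =>
            F (p.1, p.2.1) + ⟪p.2.2, h p.1 - p.2.1⟫_ℝ)
          (x₀, h x₀, lam) = 0 := by
  classical
  let E := EuclideanSpace ℝ (Fin n)
  let Fm := EuclideanSpace ℝ (Fin m)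
  set L := fderiv ℝ F (x₀, h x₀) with hLdef
  set D := fderiv ℝ h x₀ with hDdef
  set π₁ : (E × Fm × Fm) →L[ℝ] E := ContinuousLinearMap.fst ℝ E (Fm × Fm) with hπ₁
  set π₂ : (E × Fm × Fm) →L[ℝ] Fm :=
    (ContinuousLinearMap.fst ℝ Fm Fm).comp (ContinuousLinearMap.snd ℝ E (Fm × Fm)) with hπ₂
  set π₃ : (E × Fm × Fm) →L[ℝ] Fm :=
    (ContinuousLinearMap.snd ℝ Fm Fm).comp (ContinuousLinearMap.snd ℝ E (Fm × Fm)) with hπ₃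
  -- derivative of the substituted function
  have hpair : HasFDerivAt (fun x : E => (x, h x)) ((ContinuousLinearMap.id ℝ E).prod D) x₀ :=
    HasFDerivAt.prodMk (hasFDerivAt_id x₀) (hh x₀).hasFDerivAt
  have hsub : HasFDerivAt (fun x : E => F (x, h x))
      (L.comp ((ContinuousLinearMap.id ℝ E).prod D)) x₀ := by
    exact ((hF (x₀, h x₀)).hasFDerivAt).comp x₀ hpair
  have hsub' : fderiv ℝ (fun x : E => F (x, h x)) x₀
      = L.comp ((ContinuousLinearMap.id ℝ E).prod D) := hsub.fderiv
  -- derivative of the extended function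
  have hext : ∀ lam : Fm,
      HasFDerivAt (fun p : E × Fm × Fm => F (p.1, p.2.1) + ⟪p.2.2, h p.1 - p.2.1⟫_ℝ)
        (L.comp (π₁.prod π₂) +
          (fderivInnerCLM ℝ (lam, h x₀ - h x₀)).comp (π₃.prod (D.comp π₁ - π₂)))
        (x₀, h x₀, lam) := by
    intro lam
    have h1 : HasFDerivAt (fun p : E × Fm × Fm => p.1) π₁ (x₀, h x₀, lam) := hasFDerivAt_fst
    have h2 : HasFDerivAt (fun p : E × Fm × Fm => p.2.1) π₂ (x₀, h x₀, lam) := by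
      exact HasFDerivAt.comp _ hasFDerivAt_fst hasFDerivAt_snd
    have h3 : HasFDerivAt (fun p : E × Fm × Fm => p.2.2) π₃ (x₀, h x₀, lam) := by
      exact HasFDerivAt.comp _ hasFDerivAt_snd hasFDerivAt_snd
    have hFpart : HasFDerivAt (fun p : E × Fm × Fm => F (p.1, p.2.1))
        (L.comp (π₁.prod π₂)) (x₀, h x₀, lam) := by
      exact HasFDerivAt.comp _ ((hF (x₀, h x₀)).hasFDerivAt) (HasFDerivAt.prodMk h1 h2)
    have hg : HasFDerivAt (fun p : E × Fm × Fm => h p.1 - p.2.1)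
        (D.comp π₁ - π₂) (x₀, h x₀, lam) := by
      exact (HasFDerivAt.comp _ ((hh x₀).hasFDerivAt) h1).sub h2
    exact hFpart.add (h3.inner ℝ hg)
  constructor
  · intro h0
    refine ⟨(InnerProductSpace.toDual ℝ Fm).symm
      (L.comp (ContinuousLinearMap.inr ℝ E Fm)), ?_⟩
    set lam := (InnerProductSpace.toDual ℝ Fm).symm
      (L.comp (ContinuousLinearMap.inr ℝ E Fm)) with hlam
    have hlamv : ∀ v : Fm, ⟪lam, v⟫_ℝ = L (0, v) := by
      intro v
      rw [hlam, InnerProductSpace.toDual_symm_apply]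
      rfl
    rw [(hext lam).fderiv]
    refine ContinuousLinearMap.ext fun p => ?_
    obtain ⟨u, v, w⟩ := p
    have hL0 : L (u, D u) = 0 := by
      rw [hsub'] at h0
      have := congrFun (congrArg DFunLike.coe h0) u
      simpa using this
    simp only [ContinuousLinearMap.add_apply, ContinuousLinearMap.comp_apply,
      ContinuousLinearMap.prod_apply, ContinuousLinearMap.sub_apply,
      ContinuousLinearMap.zero_apply, fderivInnerCLM_apply, hπ₁, hπ₂, hπ₃,
      ContinuousLinearMap.coe_fst', ContinuousLinearMap.coe_snd']
    rw [sub_self, inner_zero_right, add_zero, hlamv]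
    have : L (u, v) + L (0, D u - v) = L (u, D u) := by
      rw [← map_add]
      congr 1
      simp [Prod.mk_add_mk]
    rw [this, hL0]
  · rintro ⟨lam, h0⟩
    rw [(hext lam).fderiv] at h0
    rw [hsub']
    refine ContinuousLinearMap.ext fun u => ?_
    have := congrFun (congrArg DFunLike.coe h0) (u, D u, 0)
    simp only [ContinuousLinearMap.add_apply, ContinuousLinearMap.comp_apply,
      ContinuousLinearMap.prod_apply, ContinuousLinearMap.sub_apply,
      ContinuousLinearMap.zero_apply, fderivInnerCLM_apply, hπ₁, hπ₂, hπ₃,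
      ContinuousLinearMap.coe_fst', ContinuousLinearMap.coe_snd',
      sub_self, inner_zero_right, inner_zero_left, add_zero] at this
    simpa using this
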